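/- arXiv:1703.06176 — 2 statements merged into one kernel-verified Lean document; each statement's English description precedes it below -/
import Mathlib

section
/- Marginalization bound: with (S, O_E, O_{-E}) having joint density |J|·f(s)·g_E(D_E s + P_E o_E + q_E)·∏_j g_{j,-E}(o_{j,-E} + D_{j,-E}s + P_{j,-E}o_E + q_{j,-E}), and separable selection region R = R_S × R_E × ∏_j R_{j,-E}, the probability P((S,O) ∈ R) equals E[B(O_E; S) 1_{(S,O_E) ∈ R_S × R_E}], where B(o_E; s) = ∏_j ∫_{R_{j,-E}} g_{j,-E}(o_{j,-E} + D_{j,-E}s + P_{j,-E}o_E + q_{j,-E}) do_{j,-E}. -/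
open MeasureTheory Matrix Real

lemma marg_key {m : ℕ} (g : Fin m → ℝ → ℝ) (hg : ∀ j, Measurable (g j))
    (Rm : Fin m → Set ℝ) (hRm : ∀ j, MeasurableSet (Rm j)) (c : Fin m → ℝ) :
    (∫ om in {om : Fin m → ℝ | ∀ j, om j ∈ Rm j}, ∏ j, g j (om j + c j))
      = ∏ j, ∫ t in Rm j, g j (t + c j) := by
  have hset : {om : Fin m → ℝ | ∀ j, om j ∈ Rm j} = Set.pi Set.univ Rm := by
    ext om; simp [Set.mem_pi]
  rw [hset, ← integral_indicator (MeasurableSet.univ_pi hRm)]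
  have hind : ∀ om : Fin m → ℝ,
      (Set.univ.pi Rm).indicator (fun om => ∏ j, g j (om j + c j)) om
        = ∏ j, (Rm j).indicator (fun t => g j (t + c j)) (om j) := by
    intro om
    by_cases h : ∀ j, om j ∈ Rm j
    · rw [Set.indicator_of_mem (by simpa [Set.mem_pi] using h)]
      exact Finset.prod_congr rfl fun j _ => (Set.indicator_of_mem (h j) (fun t => g j (t + c j))).symm
    · push_neg at h
      obtain ⟨j, hj⟩ := h
      rw [Set.indicator_of_notMem (by simp [Set.mem_pi]; exact ⟨j, hj⟩)]
      exact (Finset.prod_eq_zero (Finset.mem_univ j)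
        (Set.indicator_of_notMem hj _)).symm
  simp_rw [hind]
  rw [volume_pi, MeasureTheory.integral_fintype_prod_eq_prod (ι := Fin m)
    (fun j t => (Rm j).indicator (fun t => g j (t + c j)) t)]
  exact Finset.prod_congr rfl fun j _ => integral_indicator (hRm j)

/-- Marginalization of the inactive optimization variables: with joint density
`|J| · f(s) · g_E(D_E s + P_E o_E + q_E) · ∏_j g_{j,-E}(o_{j,-E} + D_{j,-E} s + P_{j,-E} o_E + q_{j,-E})`
on `(s, o_E, o_{-E})` and a separable selection region
`R = R_S × R_E × ∏_j R_{j,-E}`, the selection probability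
`P((S,O) ∈ R)` equals `E[ B(O_E; S) 1_{(S,O_E) ∈ R_S × R_E} ]`, where
`B(o_E; s) = ∏_j ∫_{R_{j,-E}} g_{j,-E}(t + D_{j,-E} s + P_{j,-E} o_E + q_{j,-E}) dt`. -/
theorem marginalization_inactive_variables
    {d e m : ℕ}
    (J : ℝ)
    (f : (Fin d → ℝ) → ℝ) (gE : (Fin e → ℝ) → ℝ) (g : Fin m → ℝ → ℝ)
    (hf : Measurable f) (hgE : Measurable gE) (hg : ∀ j, Measurable (g j))
    (hfpos : ∀ s, 0 ≤ f s) (hgEpos : ∀ w, 0 ≤ gE w) (hgpos : ∀ j t, 0 ≤ g j t)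
    (hfint : Integrable f) (hgEint : Integrable gE) (hgint : ∀ j, Integrable (g j))
    (DE : Matrix (Fin e) (Fin d) ℝ) (PE : Matrix (Fin e) (Fin e) ℝ) (qE : Fin e → ℝ)
    (Dm : Matrix (Fin m) (Fin d) ℝ) (Pm : Matrix (Fin m) (Fin e) ℝ) (qm : Fin m → ℝ)
    (RS : Set (Fin d → ℝ)) (RE : Set (Fin e → ℝ)) (Rm : Fin m → Set ℝ)
    (hRS : MeasurableSet RS) (hRE : MeasurableSet RE)
    (hRm : ∀ j, MeasurableSet (Rm j))
    -- `B(o_E; s)`: exact volume of the inactive selection region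
    (B : (Fin e → ℝ) → (Fin d → ℝ) → ℝ)
    (hB : ∀ oE s, B oE s =
      ∏ j, ∫ t in Rm j, g j (t + (Dm *ᵥ s) j + (Pm *ᵥ oE) j + qm j)) :
    -- `P((S,O) ∈ R)` as the integral of the joint density over the separable region
    (∫ s in RS, ∫ oE in RE, ∫ om in {om : Fin m → ℝ | ∀ j, om j ∈ Rm j},
        |J| * f s * gE (DE *ᵥ s + PE *ᵥ oE + qE) *
          ∏ j, g j (om j + (Dm *ᵥ s) j + (Pm *ᵥ oE) j + qm j))
      = ∫ s in RS, ∫ oE in RE,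
          |J| * f s * gE (DE *ᵥ s + PE *ᵥ oE + qE) * B oE s := by
  have h2 : ∀ (s : Fin d → ℝ) (oE : Fin e → ℝ),
      (∫ om in {om : Fin m → ℝ | ∀ j, om j ∈ Rm j},
        |J| * f s * gE (DE *ᵥ s + PE *ᵥ oE + qE) *
          ∏ j, g j (om j + (Dm *ᵥ s) j + (Pm *ᵥ oE) j + qm j))
      = |J| * f s * gE (DE *ᵥ s + PE *ᵥ oE + qE) * B oE s := by
    intro s oE
    rw [MeasureTheory.integral_const_mul _ _, hB oE s]
    congr 1
    simpa [add_assoc] using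
      marg_key g hg Rm hRm (fun j => (Dm *ᵥ s) j + (Pm *ᵥ oE) j + qm j)
  simp only [h2]
end

section
/- Gradient of the selective log-posterior: if f(s|β*) is Gaussian with mean μ(β*) and covariance Σ_f, and the approximate normalizer is exp(δ*(Σ_f^{-1}μ(β*)) − μ(β*)ᵀΣ_f^{-1}μ(β*)/2 + const) where δ(z) = ½zᵀΣ_f^{-1}z + inf_o { Λ_g*(Dz + Po + q) + b(o) } is differentiable and strictly convex, then the gradient of log π̃(β*|s) = log π(β*) + log f(s|β*) − log normalizer with respect to β* equals ∂log π/∂β* + (∂μ/∂β*)ᵀ Σ_f^{-1}(s − s*(Σ_f^{-1}μ(β*))), where s*(v) = ∇δ*(v) = argmax_z { zᵀv − δ(z) }. -/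
open Matrix Real

namespace GSel
variable {d : ℕ}

noncomputable def dotCLM (c : Fin d → ℝ) : (Fin d → ℝ) →L[ℝ] ℝ :=
  LinearMap.toContinuousLinearMap
    { toFun := fun x => c ⬝ᵥ x
      map_add' := fun x y => dotProduct_add c x y
      map_smul' := fun a x => by simp }

@[simp] lemma dotCLM_apply (c x : Fin d → ℝ) : dotCLM c x = c ⬝ᵥ x := rfl

noncomputable def mvCLM {p : ℕ} (A : Matrix (Fin p) (Fin d) ℝ) :
    (Fin d → ℝ) →L[ℝ] (Fin p → ℝ) :=
  LinearMap.toContinuousLinearMap A.mulVecLin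

@[simp] lemma mvCLM_apply {p : ℕ} (A : Matrix (Fin p) (Fin d) ℝ) (x : Fin d → ℝ) :
    mvCLM A x = A *ᵥ x := rfl

lemma hasFDerivAt_dot {E : Type*} [NormedAddCommGroup E] [NormedSpace ℝ E]
    {u w : E → (Fin d → ℝ)} {U W : E →L[ℝ] (Fin d → ℝ)} {x : E}
    (hu : HasFDerivAt u U x) (hw : HasFDerivAt w W x) :
    HasFDerivAt (fun y => u y ⬝ᵥ w y)
      (dotCLM (w x) ∘L U + dotCLM (u x) ∘L W) x := by
  have h : ∀ i : Fin d, HasFDerivAt (fun y => u y i * w y i)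
      (u x i • ((ContinuousLinearMap.proj i) ∘L W) +
       w x i • ((ContinuousLinearMap.proj i) ∘L U)) x := by
    intro i
    have h1 : HasFDerivAt (fun y => u y i) ((ContinuousLinearMap.proj i) ∘L U) x :=
      (ContinuousLinearMap.proj (R := ℝ) (φ := fun _ : Fin d => ℝ) i).hasFDerivAt.comp x hu
    have h2 : HasFDerivAt (fun y => w y i) ((ContinuousLinearMap.proj i) ∘L W) x :=
      (ContinuousLinearMap.proj (R := ℝ) (φ := fun _ : Fin d => ℝ) i).hasFDerivAt.comp x hw
    exact h1.mul h2
  have hsum := HasFDerivAt.fun_sum (fun i (_ : i ∈ Finset.univ) => h i)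
  convert hsum using 1
  · rfl
  · rfl
  · rfl
  ext y
  simp only [ContinuousLinearMap.add_apply, ContinuousLinearMap.coe_sum',
      Finset.sum_apply, ContinuousLinearMap.smul_apply, ContinuousLinearMap.comp_apply,
      ContinuousLinearMap.proj_apply, dotCLM_apply, dotProduct, smul_eq_mul]
  rw [← Finset.sum_add_distrib]
  exact Finset.sum_congr rfl (fun i _ => by ring)


section core
variable {δ : (Fin d → ℝ) → ℝ} {sstar : (Fin d → ℝ) → (Fin d → ℝ)}
  {δstar : (Fin d → ℝ) → ℝ}

lemma max_eq_sstar (hconv : StrictConvexOn ℝ Set.univ δ)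
    (hsstar : ∀ v, IsMaxOn (fun z => z ⬝ᵥ v - δ z) Set.univ (sstar v))
    {v z : Fin d → ℝ} (hz : IsMaxOn (fun z => z ⬝ᵥ v - δ z) Set.univ z) :
    z = sstar v := by
  by_contra hne
  set w : Fin d → ℝ := (1/2 : ℝ) • z + (1/2 : ℝ) • sstar v with hw
  have h1 : δ w < (1/2) * δ z + (1/2) * δ (sstar v) :=
    hconv.2 (Set.mem_univ z) (Set.mem_univ (sstar v)) hne one_half_pos one_half_pos
      (by norm_num)
  have hlin : w ⬝ᵥ v = (1/2) * (z ⬝ᵥ v) + (1/2) * (sstar v ⬝ᵥ v) := by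
    simp [hw, add_dotProduct, smul_dotProduct]
  have e1 : z ⬝ᵥ v - δ z ≤ sstar v ⬝ᵥ v - δ (sstar v) := hsstar v (Set.mem_univ z)
  have e2 : sstar v ⬝ᵥ v - δ (sstar v) ≤ z ⬝ᵥ v - δ z := hz (Set.mem_univ (sstar v))
  have e3 : w ⬝ᵥ v - δ w ≤ z ⬝ᵥ v - δ z := hz (Set.mem_univ w)
  linarith

lemma key_subgrad
    (hsstar : ∀ v, IsMaxOn (fun z => z ⬝ᵥ v - δ z) Set.univ (sstar v))
    (hδstar : ∀ v, δstar v = (sstar v) ⬝ᵥ v - δ (sstar v)) (v w : Fin d → ℝ) :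
    δstar v + sstar v ⬝ᵥ (w - v) ≤ δstar w := by
  have h : sstar v ⬝ᵥ w - δ (sstar v) ≤ sstar w ⬝ᵥ w - δ (sstar w) :=
    hsstar w (Set.mem_univ (sstar v))
  have hd : sstar v ⬝ᵥ (w - v) = sstar v ⬝ᵥ w - sstar v ⬝ᵥ v := dotProduct_sub _ _ _
  rw [hδstar v, hδstar w]
  linarith

lemma deltastar_convexOn
    (hsstar : ∀ v, IsMaxOn (fun z => z ⬝ᵥ v - δ z) Set.univ (sstar v))
    (hδstar : ∀ v, δstar v = (sstar v) ⬝ᵥ v - δ (sstar v)) :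
    ConvexOn ℝ Set.univ δstar := by
  refine ⟨convex_univ, fun x _ y _ a b ha hb hab => ?_⟩
  set u : Fin d → ℝ := a • x + b • y with hu
  have h1 : sstar u ⬝ᵥ x - δ (sstar u) ≤ δstar x := by
    rw [hδstar x]; exact hsstar x (Set.mem_univ (sstar u))
  have h2 : sstar u ⬝ᵥ y - δ (sstar u) ≤ δstar y := by
    rw [hδstar y]; exact hsstar y (Set.mem_univ (sstar u))
  have hlin : sstar u ⬝ᵥ u = a * (sstar u ⬝ᵥ x) + b * (sstar u ⬝ᵥ y) := by
    simp [hu, dotProduct_add, dotProduct_smul]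
  have : δstar u = sstar u ⬝ᵥ u - δ (sstar u) := hδstar u
  simp only [smul_eq_mul]
  have hd : a * δ (sstar u) + b * δ (sstar u) = δ (sstar u) := by
    rw [← add_mul, hab, one_mul]
  linarith [mul_le_mul_of_nonneg_left h1 ha, mul_le_mul_of_nonneg_left h2 hb, hd]



lemma dot_le_norm (a b : Fin d → ℝ) : a ⬝ᵥ b ≤ d * ‖a‖ * ‖b‖ := by
  have h : ∀ i : Fin d, a i * b i ≤ ‖a‖ * ‖b‖ := by
    intro i
    calc a i * b i ≤ |a i * b i| := le_abs_self _
    _ = |a i| * |b i| := abs_mul _ _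
    _ ≤ ‖a‖ * ‖b‖ := by
        have h1 : |a i| ≤ ‖a‖ := by
          rw [← Real.norm_eq_abs]; exact norm_le_pi_norm a i
        have h2 : |b i| ≤ ‖b‖ := by
          rw [← Real.norm_eq_abs]; exact norm_le_pi_norm b i
        exact mul_le_mul h1 h2 (abs_nonneg _) (norm_nonneg _)
  calc a ⬝ᵥ b = ∑ i : Fin d, a i * b i := rfl
  _ ≤ ∑ _i : Fin d, ‖a‖ * ‖b‖ := Finset.sum_le_sum fun i _ => h i
  _ = d * ‖a‖ * ‖b‖ := by
      simp [Finset.sum_const, Finset.card_univ]; ring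

lemma continuous_deltastar
    (hsstar : ∀ v, IsMaxOn (fun z => z ⬝ᵥ v - δ z) Set.univ (sstar v))
    (hδstar : ∀ v, δstar v = (sstar v) ⬝ᵥ v - δ (sstar v)) :
    Continuous δstar := by
  have h := (deltastar_convexOn hsstar hδstar).continuousOn isOpen_univ
  rw [← continuousOn_univ]
  exact h

lemma sstar_continuousAt (hδc : Continuous δ)
    (hconv : StrictConvexOn ℝ Set.univ δ)
    (hsstar : ∀ v, IsMaxOn (fun z => z ⬝ᵥ v - δ z) Set.univ (sstar v))
    (hδstar : ∀ v, δstar v = (sstar v) ⬝ᵥ v - δ (sstar v))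
    (v : Fin d → ℝ) : ContinuousAt sstar v := by
  have hcont : Continuous δstar := continuous_deltastar hsstar hδstar
  obtain ⟨C, hC⟩ := (isCompact_closedBall v 2).exists_bound_of_continuousOn
    hcont.continuousOn
  have hC0 : (0:ℝ) ≤ C :=
    le_trans (norm_nonneg _) (hC v (by simp [Metric.mem_closedBall]))
  -- local boundedness of sstar
  have hM : ∀ w ∈ Metric.closedBall v 1, ‖sstar w‖ ≤ 2 * C := by
    intro w hw
    have hw1 : dist w v ≤ 1 := Metric.mem_closedBall.mp hw
    have hw2 : w ∈ Metric.closedBall v 2 := by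
      rw [Metric.mem_closedBall]; linarith
    rw [pi_norm_le_iff_of_nonneg (by positivity)]
    intro i
    set a : ℝ := if 0 ≤ sstar w i then 1 else -1 with ha
    set u : Fin d → ℝ := Pi.single i a with hu
    have hdot : sstar w ⬝ᵥ u = |sstar w i| := by
      rw [hu, dotProduct_single, ha]
      split_ifs with h
      · rw [mul_one, abs_of_nonneg h]
      · rw [abs_of_neg (lt_of_not_ge h)]; ring
    have hun : ‖u‖ ≤ 1 := by
      rw [pi_norm_le_iff_of_nonneg zero_le_one]
      intro j
      rw [hu, Pi.single_apply]
      split_ifs with h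
      · rw [ha]; split_ifs <;> norm_num
      · simp
    have hwu : w + u ∈ Metric.closedBall v 2 := by
      rw [Metric.mem_closedBall]
      have t1 : dist (w + u) v ≤ dist (w + u) w + dist w v := dist_triangle _ _ _
      have t2 : dist (w + u) w = ‖u‖ := by simp [dist_eq_norm]
      linarith
    have hkey := key_subgrad hsstar hδstar w (w + u)
    rw [add_sub_cancel_left, hdot] at hkey
    have b1 : |δstar (w + u)| ≤ C := hC _ hwu
    have b2 : |δstar w| ≤ C := hC _ hw2
    rw [Real.norm_eq_abs]
    have := abs_le.mp b1
    have := abs_le.mp b2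
    linarith [abs_le.mp b1, abs_le.mp b2]
  -- continuity via compactness
  rw [Metric.continuousAt_iff]
  by_contra hcontra
  push_neg at hcontra
  obtain ⟨ε, hε, hseq⟩ := hcontra
  choose w hw1 hw2 using fun n : ℕ => hseq (1 / (n + 1)) (by positivity)
  have hwb : ∀ n, w n ∈ Metric.closedBall v 1 := by
    intro n
    rw [Metric.mem_closedBall]
    refine le_trans (hw1 n).le ?_
    rw [div_le_one (by positivity)]
    have : (0:ℝ) ≤ (n:ℝ) := Nat.cast_nonneg n
    linarith
  have hsb : ∀ n, sstar (w n) ∈ Metric.closedBall (0 : Fin d → ℝ) (2 * C) := by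
    intro n
    rw [Metric.mem_closedBall, dist_zero_right]
    exact hM _ (hwb n)
  obtain ⟨z, _, φ, hφ, hlim⟩ := (isCompact_closedBall _ _).tendsto_subseq hsb
  have hwlim : Filter.Tendsto (fun n => w (φ n)) Filter.atTop (nhds v) := by
    have hto : Filter.Tendsto w Filter.atTop (nhds v) := by
      rw [tendsto_iff_dist_tendsto_zero]
      apply squeeze_zero (fun n => dist_nonneg) (fun n => (hw1 n).le)
      exact tendsto_one_div_add_atTop_nhds_zero_nat
    exact hto.comp hφ.tendsto_atTop
  have hdotc : Continuous fun x : (Fin d → ℝ) × (Fin d → ℝ) => x.1 ⬝ᵥ x.2 := by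
    unfold dotProduct
    exact continuous_finset_sum _ fun i _ =>
      ((continuous_apply i).comp continuous_fst).mul
        ((continuous_apply i).comp continuous_snd)
  have hmax : IsMaxOn (fun z => z ⬝ᵥ v - δ z) Set.univ z := by
    rw [isMaxOn_iff]
    intro y _
    have h1 : ∀ n, y ⬝ᵥ (w (φ n)) - δ y ≤
        sstar (w (φ n)) ⬝ᵥ (w (φ n)) - δ (sstar (w (φ n))) := fun n =>
      hsstar (w (φ n)) (Set.mem_univ y)
    have t1 : Filter.Tendsto (fun n => y ⬝ᵥ (w (φ n)) - δ y) Filter.atTop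
        (nhds (y ⬝ᵥ v - δ y)) :=
      ((hdotc.comp (Continuous.prodMk continuous_const continuous_id)).continuousAt.tendsto.comp
        hwlim).sub tendsto_const_nhds
    have t2 : Filter.Tendsto
        (fun n => sstar (w (φ n)) ⬝ᵥ (w (φ n)) - δ (sstar (w (φ n)))) Filter.atTop
        (nhds (z ⬝ᵥ v - δ z)) := by
      refine Filter.Tendsto.sub ?_ (hδc.continuousAt.tendsto.comp hlim)
      exact hdotc.continuousAt.tendsto.comp (hlim.prodMk_nhds hwlim)
    exact le_of_tendsto_of_tendsto' t1 t2 h1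
  have hzeq : z = sstar v := max_eq_sstar hconv hsstar hmax
  have hdist : Filter.Tendsto (fun n => dist (sstar (w (φ n))) (sstar v))
      Filter.atTop (nhds 0) := by
    have := hlim
    rw [hzeq] at this
    simpa using tendsto_iff_dist_tendsto_zero.mp this
  have : ε ≤ 0 := ge_of_tendsto' hdist (fun n => (hw2 (φ n)))
  · linarith


lemma deltastar_hasFDerivAt (hδc : Continuous δ)
    (hconv : StrictConvexOn ℝ Set.univ δ)
    (hsstar : ∀ v, IsMaxOn (fun z => z ⬝ᵥ v - δ z) Set.univ (sstar v))
    (hδstar : ∀ v, δstar v = (sstar v) ⬝ᵥ v - δ (sstar v))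
    (v : Fin d → ℝ) : HasFDerivAt δstar (dotCLM (sstar v)) v := by
  refine HasFDerivAt.of_isLittleO (Asymptotics.isLittleO_iff.mpr ?_)
  intro c hc
  have hca := sstar_continuousAt hδc hconv hsstar hδstar v
  have hev : ∀ᶠ w in nhds v, dist (sstar w) (sstar v) < c / (d + 1) := by
    have := Metric.tendsto_nhds.mp hca (c / (d + 1)) (by positivity)
    exact this
  filter_upwards [hev] with w hw
  have h1 : 0 ≤ δstar w - δstar v - sstar v ⬝ᵥ (w - v) := by
    have := key_subgrad hsstar hδstar v w
    linarith
  have h2 : δstar w - δstar v - sstar v ⬝ᵥ (w - v) ≤ (sstar w - sstar v) ⬝ᵥ (w - v) := by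
    have hk := key_subgrad hsstar hδstar w v
    have e1 : sstar w ⬝ᵥ (v - w) = -(sstar w ⬝ᵥ (w - v)) := by
      rw [← dotProduct_neg, neg_sub]
    have e2 : (sstar w - sstar v) ⬝ᵥ (w - v) =
        sstar w ⬝ᵥ (w - v) - sstar v ⬝ᵥ (w - v) := sub_dotProduct _ _ _
    linarith
  have h3 : (sstar w - sstar v) ⬝ᵥ (w - v) ≤ d * (c / (d + 1)) * ‖w - v‖ := by
    refine le_trans (dot_le_norm _ _) ?_
    have hn : ‖sstar w - sstar v‖ ≤ c / (d + 1) := by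
      rw [← dist_eq_norm]; exact hw.le
    have := mul_le_mul_of_nonneg_right
      (mul_le_mul_of_nonneg_left hn (by positivity : (0:ℝ) ≤ (d:ℝ))) (norm_nonneg (w - v))
    linarith
  have h4 : (d:ℝ) * (c / (d + 1)) * ‖w - v‖ ≤ c * ‖w - v‖ := by
    have hd1 : (d:ℝ) * (c / (d + 1)) ≤ c := by
      rw [mul_div_assoc']
      rw [div_le_iff₀ (by positivity)]
      nlinarith [hc.le]
    exact mul_le_mul_of_nonneg_right hd1 (norm_nonneg _)
  have hnorm : ‖δstar w - δstar v - (dotCLM (sstar v)) (w - v)‖ =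
      δstar w - δstar v - sstar v ⬝ᵥ (w - v) := by
    rw [dotCLM_apply, Real.norm_eq_abs, abs_of_nonneg h1]
  rw [hnorm]
  linarith

end core
end GSel

/-- Gradient of the selective log-posterior: with a Gaussian generative density
`f(s|β) ∝ exp(-(s-μ(β))ᵀΣ_f⁻¹(s-μ(β))/2)`, an approximate normalizer
`exp(δ*(Σ_f⁻¹μ(β)) - μ(β)ᵀΣ_f⁻¹μ(β)/2 + c)` where
`δ(z) = ½ zᵀΣ_f⁻¹z + inf_o {Λ_g*(Dz + Po + q) + b(o)}` is strictly convex and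
differentiable with conjugate `δ*` and `s*(v) = argmax_z {zᵀv - δ(z)} = ∇δ*(v)`,
the gradient of `log π̃(β|s) = log π(β) + log f(s|β) - log normalizer` equals
`∂log π/∂β + (∂μ/∂β)ᵀ Σ_f⁻¹ (s - s*(Σ_f⁻¹ μ(β)))`. -/
theorem gradient_selective_log_posterior
    {k d p : ℕ}
    (prior : (Fin k → ℝ) → ℝ) (hprior_pos : ∀ β, 0 < prior β) (hprior_diff : Differentiable ℝ prior)
    (μmap : (Fin k → ℝ) → (Fin d → ℝ)) (hμdiff : Differentiable ℝ μmap)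
    (Sf : Matrix (Fin d) (Fin d) ℝ) (hSf : Sf.PosDef)
    (Λgstar : (Fin p → ℝ) → ℝ) (b : (Fin p → ℝ) → ℝ)
    (D : Matrix (Fin p) (Fin d) ℝ) (P : Matrix (Fin p) (Fin p) ℝ) (q : Fin p → ℝ)
    (δ : (Fin d → ℝ) → ℝ)
    (hδ : ∀ z, δ z = (Sf⁻¹ *ᵥ z) ⬝ᵥ z / 2 +
      ⨅ o : Fin p → ℝ, (Λgstar (D *ᵥ z + P *ᵥ o + q) + b o))
    (hδdiff : Differentiable ℝ δ) (hδconv : StrictConvexOn ℝ Set.univ δ)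
    (sstar : (Fin d → ℝ) → (Fin d → ℝ))
    (hsstar : ∀ v, IsMaxOn (fun z => z ⬝ᵥ v - δ z) Set.univ (sstar v))
    (δstar : (Fin d → ℝ) → ℝ)
    (hδstar : ∀ v, δstar v = (sstar v) ⬝ᵥ v - δ (sstar v))
    (s : Fin d → ℝ) (c : ℝ)
    -- the (approximate) selective log-posterior, up to additive constant `c`
    (L : (Fin k → ℝ) → ℝ)
    (hL : ∀ β, L β = Real.log (prior β)
      - (Sf⁻¹ *ᵥ (s - μmap β)) ⬝ᵥ (s - μmap β) / 2
      - (δstar (Sf⁻¹ *ᵥ μmap β) - (Sf⁻¹ *ᵥ μmap β) ⬝ᵥ μmap β / 2 + c)) :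
    ∀ (β v : Fin k → ℝ),
      fderiv ℝ L β v =
        fderiv ℝ (fun β' => Real.log (prior β')) β v +
          (Sf⁻¹ *ᵥ (s - sstar (Sf⁻¹ *ᵥ μmap β))) ⬝ᵥ (fderiv ℝ μmap β v) := by
  intro β v
  -- symmetry of Sf⁻¹
  have hAt : (Sf⁻¹)ᵀ = Sf⁻¹ := by
    have h := hSf.1.inv
    rwa [Matrix.IsHermitian, Matrix.conjTranspose_eq_transpose_of_trivial] at h
  have hsymm : ∀ x y : Fin d → ℝ, (Sf⁻¹ *ᵥ x) ⬝ᵥ y = x ⬝ᵥ (Sf⁻¹ *ᵥ y) := by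
    intro x y
    calc (Sf⁻¹ *ᵥ x) ⬝ᵥ y = y ⬝ᵥ (Sf⁻¹ *ᵥ x) := dotProduct_comm _ _
    _ = (y ᵥ* Sf⁻¹) ⬝ᵥ x := dotProduct_mulVec _ _ _
    _ = ((Sf⁻¹)ᵀ *ᵥ y) ⬝ᵥ x := by rw [Matrix.mulVec_transpose]
    _ = (Sf⁻¹ *ᵥ y) ⬝ᵥ x := by rw [hAt]
    _ = x ⬝ᵥ (Sf⁻¹ *ᵥ y) := dotProduct_comm _ _
  -- derivatives of the pieces
  have hM : HasFDerivAt μmap (fderiv ℝ μmap β) β := (hμdiff β).hasFDerivAt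
  set M := fderiv ℝ μmap β with hMdef
  have hg : HasFDerivAt (fun b => Sf⁻¹ *ᵥ μmap b) ((GSel.mvCLM Sf⁻¹) ∘L M) β :=
    ((GSel.mvCLM Sf⁻¹).hasFDerivAt).comp β hM
  have hsm : HasFDerivAt (fun b => s - μmap b) (-M) β := hM.const_sub s
  have hAsm : HasFDerivAt (fun b => Sf⁻¹ *ᵥ (s - μmap b)) ((GSel.mvCLM Sf⁻¹) ∘L (-M)) β :=
    ((GSel.mvCLM Sf⁻¹).hasFDerivAt).comp β hsm
  have ht1 : HasFDerivAt (fun b => (Sf⁻¹ *ᵥ (s - μmap b)) ⬝ᵥ (s - μmap b))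
      (GSel.dotCLM (s - μmap β) ∘L ((GSel.mvCLM Sf⁻¹) ∘L (-M)) +
        GSel.dotCLM (Sf⁻¹ *ᵥ (s - μmap β)) ∘L (-M)) β :=
    GSel.hasFDerivAt_dot hAsm hsm
  have ht2 : HasFDerivAt (fun b => δstar (Sf⁻¹ *ᵥ μmap b))
      (GSel.dotCLM (sstar (Sf⁻¹ *ᵥ μmap β)) ∘L ((GSel.mvCLM Sf⁻¹) ∘L M)) β :=
    (GSel.deltastar_hasFDerivAt hδdiff.continuous hδconv hsstar hδstar _).comp β hg
  have ht3 : HasFDerivAt (fun b => (Sf⁻¹ *ᵥ μmap b) ⬝ᵥ μmap b)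
      (GSel.dotCLM (μmap β) ∘L ((GSel.mvCLM Sf⁻¹) ∘L M) +
        GSel.dotCLM (Sf⁻¹ *ᵥ μmap β) ∘L M) β :=
    GSel.hasFDerivAt_dot hg hM
  have hlogd : DifferentiableAt ℝ (fun β' => Real.log (prior β')) β :=
    (hprior_diff β).log (ne_of_gt (hprior_pos β))
  have hlog : HasFDerivAt (fun β' => Real.log (prior β'))
      (fderiv ℝ (fun β' => Real.log (prior β')) β) β := hlogd.hasFDerivAt
  have hLeq : L = fun b => Real.log (prior b)
      - 2⁻¹ * ((Sf⁻¹ *ᵥ (s - μmap b)) ⬝ᵥ (s - μmap b))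
      - (δstar (Sf⁻¹ *ᵥ μmap b) - 2⁻¹ * ((Sf⁻¹ *ᵥ μmap b) ⬝ᵥ μmap b) + c) := by
    funext b
    rw [hL b]
    ring
  have hD : HasFDerivAt L
      (fderiv ℝ (fun β' => Real.log (prior β')) β
        - (2⁻¹ : ℝ) • (GSel.dotCLM (s - μmap β) ∘L ((GSel.mvCLM Sf⁻¹) ∘L (-M)) +
            GSel.dotCLM (Sf⁻¹ *ᵥ (s - μmap β)) ∘L (-M))
        - (GSel.dotCLM (sstar (Sf⁻¹ *ᵥ μmap β)) ∘L ((GSel.mvCLM Sf⁻¹) ∘L M)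
            - (2⁻¹ : ℝ) • (GSel.dotCLM (μmap β) ∘L ((GSel.mvCLM Sf⁻¹) ∘L M) +
                GSel.dotCLM (Sf⁻¹ *ᵥ μmap β) ∘L M))) β := by
    rw [hLeq]
    exact ((hlog.sub (ht1.const_mul (2⁻¹ : ℝ))).sub
      ((ht2.sub (ht3.const_mul (2⁻¹ : ℝ))).add_const c))
  rw [hD.fderiv]
  simp only [ContinuousLinearMap.coe_sub', Pi.sub_apply, ContinuousLinearMap.smul_apply,
    ContinuousLinearMap.add_apply, ContinuousLinearMap.comp_apply,
    ContinuousLinearMap.neg_apply, GSel.dotCLM_apply, GSel.mvCLM_apply, smul_eq_mul]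
  rw [← hsymm (s - μmap β) (-(M v)), ← hsymm (sstar (Sf⁻¹ *ᵥ μmap β)) (M v),
    ← hsymm (μmap β) (M v)]
  simp only [Matrix.mulVec_sub, sub_dotProduct, dotProduct_neg, neg_dotProduct]
  ring
end
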